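/- Let n be a positive natural number, R > 0, a > 0 and s > 0. Let p₀ and q₀ be probability density functions on ℝⁿ that vanish outside the closed ball of radius R centered at the origin. Define the smoothed densities p(x) = ∫_{ℝⁿ} (2πs)^{-n/2} · exp(-‖x - a·x₀‖² / (2s)) · p₀(x₀) dx₀ and q(x) analogously with q₀ in place of p₀. Then for every x ∈ ℝⁿ, the gradients of the logarithms satisfy ‖∇ log p(x) - ∇ log q(x)‖ ≤ 2Ra/s. -/

import Mathlib

open MeasureTheory Real
open scoped BigOperators RealInnerProductSpace

noncomputable section

lemma kernel_deriv {n : ℕ} (s C w : ℝ) (hs : 0 < s) (c y : EuclideanSpace ℝ (Fin n)) :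
    HasFDerivAt (fun y : EuclideanSpace ℝ (Fin n) => C * Real.exp (-‖y - c‖ ^ 2 / (2 * s)) * w)
      ((s⁻¹ * (C * Real.exp (-‖y - c‖ ^ 2 / (2 * s)) * w)) • innerSL ℝ (c - y)) y := by
  have h1 : HasFDerivAt (fun y : EuclideanSpace ℝ (Fin n) => y - c) (ContinuousLinearMap.id ℝ (EuclideanSpace ℝ (Fin n))) y :=
    (hasFDerivAt_id y).sub_const c
  have h2 := h1.norm_sq
  have h3 : HasFDerivAt (fun y : EuclideanSpace ℝ (Fin n) => -‖y - c‖ ^ 2 / (2 * s))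
      ((-(2 * s)⁻¹) • (2 • (innerSL ℝ (y - c)).comp (ContinuousLinearMap.id ℝ (EuclideanSpace ℝ (Fin n))))) y := by
    have := h2.const_mul (-(2 * s)⁻¹)
    refine this.congr_of_eventuallyEq (Filter.Eventually.of_forall fun z => ?_)
    ring
  have h4 := (Real.hasDerivAt_exp (-‖y - c‖ ^ 2 / (2 * s))).comp_hasFDerivAt y h3
  have h5 := (h4.const_mul C).mul_const w
  refine h5.congr_fderiv ?_
  ext z
  simp [ContinuousLinearMap.smul_apply, real_inner_smul_left, inner_sub_left, smul_smul]
  field_simp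
  ring

set_option synthInstance.maxHeartbeats 1000000 in
set_option maxHeartbeats 2000000 in
lemma score_aux (n : ℕ) (R a s : ℝ) (hR : 0 < R) (ha : 0 < a) (hs : 0 < s)
    (f₀ : EuclideanSpace ℝ (Fin n) → ℝ) (h0 : ∀ x, 0 ≤ f₀ x) (hint : Integrable f₀)
    (hone : ∫ x, f₀ x = 1)
    (hsupp : ∀ x, x ∉ Metric.closedBall (0 : EuclideanSpace ℝ (Fin n)) R → f₀ x = 0)
    (f : EuclideanSpace ℝ (Fin n) → ℝ)
    (hf : ∀ x, f x = ∫ x₀, (2 * π * s) ^ (-(n : ℝ) / 2) *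
        Real.exp (-‖x - a • x₀‖ ^ 2 / (2 * s)) * f₀ x₀)
    (x : EuclideanSpace ℝ (Fin n)) :
    ∃ v : EuclideanSpace ℝ (Fin n), ‖v‖ ≤ a * R / s ∧
      HasGradientAt (fun y => Real.log (f y)) (v - s⁻¹ • x) x := by
  set C : ℝ := (2 * π * s) ^ (-(n : ℝ) / 2) with hCdef
  have hCpos : 0 < C := Real.rpow_pos_of_pos (by positivity) _
  set F : EuclideanSpace ℝ (Fin n) → EuclideanSpace ℝ (Fin n) → ℝ := fun y x₀ => C * Real.exp (-‖y - a • x₀‖ ^ 2 / (2 * s)) * f₀ x₀ with hFdef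
  have hFnonneg : ∀ y x₀, 0 ≤ F y x₀ := fun y x₀ => by
    have := h0 x₀; positivity
  have hFle : ∀ y x₀, F y x₀ ≤ C * f₀ x₀ := by
    intro y x₀
    have he : Real.exp (-‖y - a • x₀‖ ^ 2 / (2 * s)) ≤ 1 :=
      Real.exp_le_one_iff.mpr
        (div_nonpos_of_nonpos_of_nonneg (neg_nonpos.mpr (by positivity)) (by positivity))
    calc F y x₀ = C * Real.exp (-‖y - a • x₀‖ ^ 2 / (2 * s)) * f₀ x₀ := rfl
      _ ≤ C * 1 * f₀ x₀ := by
          apply mul_le_mul_of_nonneg_right _ (h0 x₀)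
          exact mul_le_mul_of_nonneg_left he hCpos.le
      _ = C * f₀ x₀ := by ring
  have hcont : ∀ y : EuclideanSpace ℝ (Fin n), Continuous (fun x₀ : EuclideanSpace ℝ (Fin n) => C * Real.exp (-‖y - a • x₀‖ ^ 2 / (2 * s))) := by
    intro y; fun_prop
  have hFmeas : ∀ y : EuclideanSpace ℝ (Fin n), AEStronglyMeasurable (F y) volume := fun y =>
    ((hcont y).aestronglyMeasurable).mul hint.aestronglyMeasurable
  have hFint : ∀ y : EuclideanSpace ℝ (Fin n), Integrable (F y) := by
    intro y
    refine (hint.const_mul C).mono' (hFmeas y) (ae_of_all _ fun x₀ => ?_)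
    rw [Real.norm_of_nonneg (hFnonneg y x₀)]
    exact hFle y x₀
  have hfeq : ∀ y, f y = ∫ x₀, F y x₀ := hf
  -- positivity of f x
  have hfpos : 0 < f x := by
    rw [hfeq x]
    rw [integral_pos_iff_support_of_nonneg (fun x₀ => hFnonneg x x₀) (hFint x)]
    have hsupport : Function.support (F x) = Function.support f₀ := by
      ext x₀
      simp only [Function.mem_support, hFdef]
      constructor
      · intro h hc; exact h (by rw [hc]; ring)
      · intro h hc
        have hne : C * Real.exp (-‖x - a • x₀‖ ^ 2 / (2 * s)) ≠ 0 := by positivity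
        exact h ((mul_eq_zero.mp hc).resolve_left hne)
    rw [hsupport]
    have := (integral_pos_iff_support_of_nonneg h0 hint).mp (by rw [hone]; norm_num)
    exact this
  -- derivative setup
  set F' : EuclideanSpace ℝ (Fin n) → EuclideanSpace ℝ (Fin n) →
      (EuclideanSpace ℝ (Fin n) →L[ℝ] ℝ) :=
    fun y x₀ => (s⁻¹ * F y x₀) • innerSL ℝ (a • x₀ - y) with hF'def
  have h_diff : ∀ x₀ y, HasFDerivAt (fun y => F y x₀) (F' y x₀) y := fun x₀ y =>
    kernel_deriv s C (f₀ x₀) hs (a • x₀) y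
  set M : ℝ := a * R + ‖x‖ + 1 with hMdef
  have hMpos : 0 < M := by positivity
  have hnorm_F' : ∀ y x₀, ‖F' y x₀‖ ≤ (s⁻¹ * F y x₀) * ‖a • x₀ - y‖ := by
    intro y x₀
    have hr : F' y x₀ = (s⁻¹ * F y x₀) • innerSL ℝ (a • x₀ - y) := rfl
    rw [hr]
    calc ‖(s⁻¹ * F y x₀) • innerSL ℝ (a • x₀ - y)‖
        ≤ ‖s⁻¹ * F y x₀‖ * ‖innerSL ℝ (a • x₀ - y)‖ :=
          ContinuousLinearMap.opNorm_smul_le _ _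
      _ = (s⁻¹ * F y x₀) * ‖a • x₀ - y‖ := by
          rw [innerSL_apply_norm (𝕜 := ℝ),
            Real.norm_of_nonneg (mul_nonneg (inv_nonneg.mpr hs.le) (hFnonneg y x₀))]
  have h_bound : ∀ x₀, ∀ y ∈ Metric.ball x 1, ‖F' y x₀‖ ≤ (C / s * M) * f₀ x₀ := by
    intro x₀ y hy
    by_cases hx₀ : x₀ ∈ Metric.closedBall (0 : EuclideanSpace ℝ (Fin n)) R
    · have hx₀n : ‖x₀‖ ≤ R := by simpa using hx₀
      have hyn : ‖y‖ ≤ ‖x‖ + 1 := by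
        have h' : ‖y - x‖ < 1 := mem_ball_iff_norm.mp hy
        calc ‖y‖ = ‖(y - x) + x‖ := by rw [sub_add_cancel]
          _ ≤ ‖y - x‖ + ‖x‖ := norm_add_le _ _
          _ ≤ ‖x‖ + 1 := by linarith
      have h1 : ‖a • x₀ - y‖ ≤ M := by
        calc ‖a • x₀ - y‖ ≤ ‖a • x₀‖ + ‖y‖ := norm_sub_le _ _
          _ = a * ‖x₀‖ + ‖y‖ := by rw [norm_smul, Real.norm_of_nonneg ha.le]
          _ ≤ a * R + (‖x‖ + 1) := add_le_add (mul_le_mul_of_nonneg_left hx₀n ha.le) hyn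
          _ = M := by rw [hMdef]; ring
      refine le_trans (hnorm_F' y x₀) ?_
      calc (s⁻¹ * F y x₀) * ‖a • x₀ - y‖ ≤ (s⁻¹ * (C * f₀ x₀)) * M := by
            apply mul_le_mul
              (mul_le_mul_of_nonneg_left (hFle y x₀) (inv_nonneg.mpr hs.le)) h1 (norm_nonneg _)
              (mul_nonneg (inv_nonneg.mpr hs.le) (mul_nonneg hCpos.le (h0 x₀)))
        _ = C / s * M * f₀ x₀ := by ring
    · have h0' : f₀ x₀ = 0 := hsupp x₀ hx₀
      have hz : F' y x₀ = 0 := by simp [hF'def, hFdef, h0']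
      rw [hz, norm_zero, h0', mul_zero]
  have hF'measx : AEStronglyMeasurable (F' x) volume := by
    apply AEStronglyMeasurable.smul (aestronglyMeasurable_const.mul (hFmeas x))
    exact Continuous.aestronglyMeasurable
      ((innerSL ℝ).continuous.comp (by fun_prop))
  have hbound_int : Integrable (fun x₀ => (C / s * M) * f₀ x₀) := hint.const_mul _
  have hD : HasFDerivAt (fun y => ∫ x₀, F y x₀) (∫ x₀, F' x x₀) x :=
    hasFDerivAt_integral_of_dominated_of_fderiv_le (Metric.ball_mem_nhds x one_pos)
      (Filter.Eventually.of_forall fun y => hFmeas y) (hFint x) hF'measx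
      (ae_of_all _ h_bound) hbound_int (ae_of_all _ fun x₀ y hy => h_diff x₀ y)
  have hfD : HasFDerivAt f (∫ x₀, F' x x₀) x := by
    have he : f = fun y => ∫ x₀, F y x₀ := funext hfeq
    rw [he]
    exact hD
  -- vector-valued integrands
  set g : EuclideanSpace ℝ (Fin n) → EuclideanSpace ℝ (Fin n) :=
    fun x₀ => (s⁻¹ * F x x₀) • (a • x₀ - x) with hgdef
  set g1 : EuclideanSpace ℝ (Fin n) → EuclideanSpace ℝ (Fin n) :=
    fun x₀ => (s⁻¹ * F x x₀) • (a • x₀) with hg1def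
  have hgmeas : AEStronglyMeasurable g volume :=
    (aestronglyMeasurable_const.mul (hFmeas x)).smul
      (Continuous.aestronglyMeasurable (by fun_prop))
  have hg1meas : AEStronglyMeasurable g1 volume :=
    (aestronglyMeasurable_const.mul (hFmeas x)).smul
      (Continuous.aestronglyMeasurable (by fun_prop))
  have hgint : Integrable g := by
    refine hbound_int.mono' hgmeas (ae_of_all _ fun x₀ => ?_)
    by_cases hx₀ : x₀ ∈ Metric.closedBall (0 : EuclideanSpace ℝ (Fin n)) R
    · have hx₀n : ‖x₀‖ ≤ R := by simpa using hx₀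
      have h1 : ‖a • x₀ - x‖ ≤ M := by
        calc ‖a • x₀ - x‖ ≤ ‖a • x₀‖ + ‖x‖ := norm_sub_le _ _
          _ = a * ‖x₀‖ + ‖x‖ := by rw [norm_smul, Real.norm_of_nonneg ha.le]
          _ ≤ a * R + ‖x‖ + 1 := by
              have := mul_le_mul_of_nonneg_left hx₀n ha.le
              linarith
          _ = M := by rw [hMdef]
      calc ‖g x₀‖ = ‖s⁻¹ * F x x₀‖ * ‖a • x₀ - x‖ := norm_smul _ _
        _ = (s⁻¹ * F x x₀) * ‖a • x₀ - x‖ := by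
            rw [Real.norm_of_nonneg (mul_nonneg (inv_nonneg.mpr hs.le) (hFnonneg x x₀))]
        _ ≤ (s⁻¹ * (C * f₀ x₀)) * M :=
            mul_le_mul (mul_le_mul_of_nonneg_left (hFle x x₀) (inv_nonneg.mpr hs.le)) h1
              (norm_nonneg _) (mul_nonneg (inv_nonneg.mpr hs.le) (mul_nonneg hCpos.le (h0 x₀)))
        _ = C / s * M * f₀ x₀ := by ring
    · simp [hgdef, hFdef, hsupp x₀ hx₀, Real.norm_of_nonneg,
        mul_nonneg (div_nonneg hCpos.le hs.le) hMpos.le]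
  have hg1int : Integrable g1 := by
    refine (hint.const_mul (s⁻¹ * C * (a * R))).mono' hg1meas (ae_of_all _ fun x₀ => ?_)
    by_cases hx₀ : x₀ ∈ Metric.closedBall (0 : EuclideanSpace ℝ (Fin n)) R
    · have hx₀n : ‖x₀‖ ≤ R := by simpa using hx₀
      have h1 : ‖a • x₀‖ ≤ a * R := by
        rw [norm_smul, Real.norm_of_nonneg ha.le]
        exact mul_le_mul_of_nonneg_left hx₀n ha.le
      calc ‖g1 x₀‖ = ‖s⁻¹ * F x x₀‖ * ‖a • x₀‖ := norm_smul _ _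
        _ = (s⁻¹ * F x x₀) * ‖a • x₀‖ := by
            rw [Real.norm_of_nonneg (mul_nonneg (inv_nonneg.mpr hs.le) (hFnonneg x x₀))]
        _ ≤ (s⁻¹ * (C * f₀ x₀)) * (a * R) :=
            mul_le_mul (mul_le_mul_of_nonneg_left (hFle x x₀) (inv_nonneg.mpr hs.le)) h1
              (norm_nonneg _) (mul_nonneg (inv_nonneg.mpr hs.le) (mul_nonneg hCpos.le (h0 x₀)))
        _ = s⁻¹ * C * (a * R) * f₀ x₀ := by ring
    · simp [hg1def, hFdef, hsupp x₀ hx₀]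
  have hg2int : Integrable (fun x₀ => (s⁻¹ * F x x₀) • x) :=
    ((hFint x).const_mul s⁻¹).smul_const x
  have hF'int : Integrable (F' x) :=
    hbound_int.mono' hF'measx
      (ae_of_all _ fun x₀ => h_bound x₀ x (Metric.mem_ball_self one_pos))
  -- identify the Fréchet derivative with the gradient vector
  have hDG : (∫ x₀, F' x x₀) =
      (InnerProductSpace.toDual ℝ (EuclideanSpace ℝ (Fin n))) (∫ x₀, g x₀) := by
    apply ContinuousLinearMap.ext
    intro z
    rw [ContinuousLinearMap.integral_apply hF'int]
    have h1 : ∀ x₀, (F' x x₀) z = ⟪z, g x₀⟫ := by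
      intro x₀
      have hr : (F' x x₀) z = (s⁻¹ * F x x₀) * ⟪a • x₀ - x, z⟫ := by
        show ((s⁻¹ * F x x₀) • innerSL ℝ (a • x₀ - x)) z = _
        rw [ContinuousLinearMap.smul_apply, innerSL_apply_apply, smul_eq_mul]
      have hr2 : ⟪z, g x₀⟫ = (s⁻¹ * F x x₀) * ⟪z, a • x₀ - x⟫ := by
        show ⟪z, (s⁻¹ * F x x₀) • (a • x₀ - x)⟫ = _
        exact real_inner_smul_right _ _ _
      rw [hr, hr2, real_inner_comm]
    simp_rw [h1]
    rw [integral_inner hgint z, InnerProductSpace.toDual_apply_apply, real_inner_comm]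
  have hgrad : HasGradientAt f (∫ x₀, g x₀) x := by
    rw [hasGradientAt_iff_hasFDerivAt, ← hDG]
    exact hfD
  have hlog : HasGradientAt (fun y => Real.log (f y)) ((f x)⁻¹ • ∫ x₀, g x₀) x := by
    rw [hasGradientAt_iff_hasFDerivAt] at hgrad ⊢
    have hcomp := (Real.hasDerivAt_log hfpos.ne').comp_hasFDerivAt x hgrad
    have hmap : (InnerProductSpace.toDual ℝ (EuclideanSpace ℝ (Fin n)))
        ((f x)⁻¹ • ∫ x₀, g x₀) = (f x)⁻¹ •
          (InnerProductSpace.toDual ℝ (EuclideanSpace ℝ (Fin n))) (∫ x₀, g x₀) := by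
      simp
    rw [hmap]
    exact hcomp
  have hsplit : (∫ x₀, g x₀) = (∫ x₀, g1 x₀) - (s⁻¹ * f x) • x := by
    have he : g = fun x₀ => g1 x₀ - (s⁻¹ * F x x₀) • x := by
      funext x₀
      simp [hgdef, hg1def, smul_sub]
    rw [he, integral_sub hg1int hg2int, integral_smul_const]
    congr 2
    rw [integral_const_mul, ← hfeq x]
  set V := ∫ x₀, g1 x₀ with hVdef
  have hVle : ‖V‖ ≤ (a * R * s⁻¹) * f x := by
    calc ‖V‖ ≤ ∫ x₀, ‖g1 x₀‖ := norm_integral_le_integral_norm _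
      _ ≤ ∫ x₀, (a * R * s⁻¹) * F x x₀ := by
          refine integral_mono hg1int.norm ((hFint x).const_mul _) fun x₀ => ?_
          by_cases hx₀ : x₀ ∈ Metric.closedBall (0 : EuclideanSpace ℝ (Fin n)) R
          · have hx₀n : ‖x₀‖ ≤ R := by simpa using hx₀
            have h1 : ‖a • x₀‖ ≤ a * R := by
              rw [norm_smul, Real.norm_of_nonneg ha.le]
              exact mul_le_mul_of_nonneg_left hx₀n ha.le
            calc ‖g1 x₀‖ = ‖s⁻¹ * F x x₀‖ * ‖a • x₀‖ := norm_smul _ _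
              _ = (s⁻¹ * F x x₀) * ‖a • x₀‖ := by
                  rw [Real.norm_of_nonneg (mul_nonneg (inv_nonneg.mpr hs.le) (hFnonneg x x₀))]
              _ ≤ (s⁻¹ * F x x₀) * (a * R) :=
                  mul_le_mul_of_nonneg_left h1
                    (mul_nonneg (inv_nonneg.mpr hs.le) (hFnonneg x x₀))
              _ = (a * R * s⁻¹) * F x x₀ := by ring
          · have h0' : f₀ x₀ = 0 := hsupp x₀ hx₀
            have : F x x₀ = 0 := by simp [hFdef, h0']
            simp [hg1def, this]
      _ = (a * R * s⁻¹) * f x := by rw [integral_const_mul, ← hfeq x]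
  refine ⟨(f x)⁻¹ • V, ?_, ?_⟩
  · rw [norm_smul, Real.norm_of_nonneg (inv_nonneg.mpr hfpos.le)]
    calc (f x)⁻¹ * ‖V‖ ≤ (f x)⁻¹ * ((a * R * s⁻¹) * f x) :=
        mul_le_mul_of_nonneg_left hVle (inv_nonneg.mpr hfpos.le)
      _ = a * R / s := by
          field_simp
  · have hfin : (f x)⁻¹ • (∫ x₀, g x₀) = (f x)⁻¹ • V - s⁻¹ • x := by
      rw [hsplit, smul_sub, smul_smul]
      congr 1
      have : (f x)⁻¹ * (s⁻¹ * f x) = s⁻¹ := by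
        field_simp
      rw [this]
    rw [← hfin]
    exact hlog


/-- VP-SDE score MSE bound (paper's Theorem 1, pointwise in time).
The smoothed (Gaussian-mixture) densities of two initial densities supported in the
closed ball of radius `R` have score functions whose difference is bounded by `2Ra/s`. -/
theorem vp_score_mse_bound
    (n : ℕ) (hn : 0 < n) (R a s : ℝ) (hR : 0 < R) (ha : 0 < a) (hs : 0 < s)
    (p₀ q₀ : EuclideanSpace ℝ (Fin n) → ℝ)
    (hp₀nonneg : ∀ x, 0 ≤ p₀ x) (hq₀nonneg : ∀ x, 0 ≤ q₀ x)
    (hp₀int : Integrable p₀) (hq₀int : Integrable q₀)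
    (hp₀one : ∫ x, p₀ x = 1) (hq₀one : ∫ x, q₀ x = 1)
    (hp₀supp : ∀ x, x ∉ Metric.closedBall (0 : EuclideanSpace ℝ (Fin n)) R → p₀ x = 0)
    (hq₀supp : ∀ x, x ∉ Metric.closedBall (0 : EuclideanSpace ℝ (Fin n)) R → q₀ x = 0)
    (p q : EuclideanSpace ℝ (Fin n) → ℝ)
    (hp : ∀ x, p x =
      ∫ x₀, (2 * π * s) ^ (-(n : ℝ) / 2) * Real.exp (-‖x - a • x₀‖ ^ 2 / (2 * s)) * p₀ x₀)
    (hq : ∀ x, q x =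
      ∫ x₀, (2 * π * s) ^ (-(n : ℝ) / 2) * Real.exp (-‖x - a • x₀‖ ^ 2 / (2 * s)) * q₀ x₀) :
    ∀ x : EuclideanSpace ℝ (Fin n),
      ‖gradient (fun y => Real.log (p y)) x - gradient (fun y => Real.log (q y)) x‖
        ≤ 2 * R * a / s := by
  intro x
  obtain ⟨vp, hvp, hgp⟩ := score_aux n R a s hR ha hs p₀ hp₀nonneg hp₀int hp₀one hp₀supp p hp x
  obtain ⟨vq, hvq, hgq⟩ := score_aux n R a s hR ha hs q₀ hq₀nonneg hq₀int hq₀one hq₀supp q hq x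
  rw [hgp.gradient, hgq.gradient]
  have he : (vp - s⁻¹ • x) - (vq - s⁻¹ • x) = vp - vq := by abel
  rw [he]
  calc ‖vp - vq‖ ≤ ‖vp‖ + ‖vq‖ := norm_sub_le _ _
    _ ≤ a * R / s + a * R / s := add_le_add hvp hvq
    _ = 2 * R * a / s := by ring
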